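/- arXiv:2603.27488 — 4 statements merged into one kernel-verified Lean document; each statement's English description precedes it below -/
import Mathlib

section
/- Let μ be a measure on a space Z, let p : Z → ℝ≥0 be a probability density with respect to μ, let L : Z → ℝ≥0 be a measurable likelihood function, and let q̃ : Z → ℝ≥0 be a measurable function with support contained in the support of p. For any γ ∈ (0,1), the log-evidence satisfies log ∫ p(z) L(z) dμ ≥ (1/(1-γ)) · log ∫ q̃(z) L(z)^{1-γ} dμ − (γ/(1-γ)) · log ∫ q̃(z)^{1/γ} p(z)^{1−1/γ} dμ, provided all integrals are finite and positive. -/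
open MeasureTheory Real

/-- Fractional-posterior lower bound `L_γ` from Hölder's inequality, `γ ∈ (0,1)`. -/
theorem fractional_lower_bound
    {Z : Type*} [MeasurableSpace Z] (μ : Measure Z)
    (p L q : Z → ℝ) (γ : ℝ) (hγ : γ ∈ Set.Ioo (0:ℝ) 1)
    (hp : ∀ z, 0 ≤ p z) (hL : ∀ z, 0 ≤ L z) (hq : ∀ z, 0 ≤ q z)
    (hpm : Measurable p) (hLm : Measurable L) (hqm : Measurable q)
    (hprob : ∫ z, p z ∂μ = 1)
    (hsupp : ∀ z, p z = 0 → q z = 0)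
    (h1 : Integrable (fun z => p z * L z) μ)
    (h1pos : 0 < ∫ z, p z * L z ∂μ)
    (h2 : Integrable (fun z => q z * L z ^ (1 - γ)) μ)
    (h2pos : 0 < ∫ z, q z * L z ^ (1 - γ) ∂μ)
    (h3 : Integrable (fun z => q z ^ (1/γ) * p z ^ (1 - 1/γ)) μ)
    (h3pos : 0 < ∫ z, q z ^ (1/γ) * p z ^ (1 - 1/γ) ∂μ) :
    Real.log (∫ z, p z * L z ∂μ) ≥
      (1/(1-γ)) * Real.log (∫ z, q z * L z ^ (1 - γ) ∂μ)
      - (γ/(1-γ)) * Real.log (∫ z, q z ^ (1/γ) * p z ^ (1 - 1/γ) ∂μ) := by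
  obtain ⟨hγ0, hγ1⟩ := hγ
  set β : ℝ := 1 - γ with hβ
  have hβ0 : 0 < β := by simp [hβ]; linarith
  -- pointwise identity
  have key : ∀ z, (p z * L z) ^ β * (q z ^ (1/γ) * p z ^ (1 - 1/γ)) ^ γ
      = q z * L z ^ β := by
    intro z
    rcases eq_or_lt_of_le (hp z) with hz | hz
    · rw [hsupp z hz.symm, ← hz]
      rw [zero_mul, Real.zero_rpow hβ0.ne', zero_mul, zero_mul]
    · rw [Real.mul_rpow (hp z) (hL z),
        Real.mul_rpow (Real.rpow_nonneg (hq z) _) (Real.rpow_nonneg (hp z) _),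
        ← Real.rpow_mul (hq z), ← Real.rpow_mul (hp z)]
      have hγγ : 1/γ * γ = 1 := by field_simp
      rw [hγγ, Real.rpow_one]
      have hstep : p z ^ β * L z ^ β * (q z * p z ^ ((1 - 1/γ) * γ))
          = q z * L z ^ β * (p z ^ β * p z ^ ((1 - 1/γ) * γ)) := by ring
      have h2 : β + (1 - 1/γ) * γ = 0 := by field_simp [hβ]; linarith
      rw [hstep, ← Real.rpow_add hz, h2]
      simp
  -- Hölder in ENNReal
  have hF : AEMeasurable (fun z => ENNReal.ofReal (p z * L z)) μ :=
    (ENNReal.measurable_ofReal.comp (hpm.mul hLm)).aemeasurable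
  have hq1 : Measurable fun z => q z ^ (1/γ) := by measurability
  have hp1 : Measurable fun z => p z ^ (1 - 1/γ) := by measurability
  have hG : AEMeasurable (fun z => ENNReal.ofReal (q z ^ (1/γ) * p z ^ (1 - 1/γ))) μ :=
    (ENNReal.measurable_ofReal.comp (hq1.mul hp1)).aemeasurable
  have holder := ENNReal.lintegral_mul_norm_pow_le hF hG hβ0.le hγ0.le (by ring)
  have hpt : ∀ z, ENNReal.ofReal (q z * L z ^ β)
      = ENNReal.ofReal (p z * L z) ^ β * ENNReal.ofReal (q z ^ (1/γ) * p z ^ (1 - 1/γ)) ^ γ := by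
    intro z
    rw [ENNReal.ofReal_rpow_of_nonneg (mul_nonneg (hp z) (hL z)) hβ0.le,
      ENNReal.ofReal_rpow_of_nonneg
        (mul_nonneg (Real.rpow_nonneg (hq z) _) (Real.rpow_nonneg (hp z) _)) hγ0.le,
      ← ENNReal.ofReal_mul (Real.rpow_nonneg (mul_nonneg (hp z) (hL z)) β), key z]
  have hli : (∫⁻ z, ENNReal.ofReal (q z * L z ^ β) ∂μ)
      ≤ (∫⁻ z, ENNReal.ofReal (p z * L z) ∂μ) ^ β
        * (∫⁻ z, ENNReal.ofReal (q z ^ (1/γ) * p z ^ (1 - 1/γ)) ∂μ) ^ γ := by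
    calc (∫⁻ z, ENNReal.ofReal (q z * L z ^ β) ∂μ)
        = ∫⁻ z, ENNReal.ofReal (p z * L z) ^ β
            * ENNReal.ofReal (q z ^ (1/γ) * p z ^ (1 - 1/γ)) ^ γ ∂μ := by
          simp_rw [hpt]
      _ ≤ _ := holder
  -- convert to real integrals
  set I1 := ∫ z, p z * L z ∂μ
  set I2 := ∫ z, q z * L z ^ (1 - γ) ∂μ
  set I3 := ∫ z, q z ^ (1/γ) * p z ^ (1 - 1/γ) ∂μ
  have e1 : (∫⁻ z, ENNReal.ofReal (p z * L z) ∂μ) = ENNReal.ofReal I1 :=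
    (MeasureTheory.ofReal_integral_eq_lintegral_ofReal h1
      (Filter.Eventually.of_forall fun z => mul_nonneg (hp z) (hL z))).symm
  have e2 : (∫⁻ z, ENNReal.ofReal (q z * L z ^ β) ∂μ) = ENNReal.ofReal I2 :=
    (MeasureTheory.ofReal_integral_eq_lintegral_ofReal h2
      (Filter.Eventually.of_forall fun z => mul_nonneg (hq z) (Real.rpow_nonneg (hL z) _))).symm
  have e3 : (∫⁻ z, ENNReal.ofReal (q z ^ (1/γ) * p z ^ (1 - 1/γ)) ∂μ) = ENNReal.ofReal I3 :=
    (MeasureTheory.ofReal_integral_eq_lintegral_ofReal h3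
      (Filter.Eventually.of_forall fun z =>
        mul_nonneg (Real.rpow_nonneg (hq z) _) (Real.rpow_nonneg (hp z) _))).symm
  rw [e1, e2, e3, ENNReal.ofReal_rpow_of_nonneg h1pos.le hβ0.le,
    ENNReal.ofReal_rpow_of_nonneg h3pos.le hγ0.le,
    ← ENNReal.ofReal_mul (Real.rpow_nonneg h1pos.le _)] at hli
  have hreal : I2 ≤ I1 ^ β * I3 ^ γ :=
    le_trans (ENNReal.ofReal_le_ofReal_iff
      (mul_nonneg (Real.rpow_nonneg h1pos.le _) (Real.rpow_nonneg h3pos.le _)) |>.mp hli) le_rfl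
  -- take logs
  have hlog : Real.log I2 ≤ β * Real.log I1 + γ * Real.log I3 := by
    have := Real.log_le_log h2pos hreal
    rwa [Real.log_mul (Real.rpow_pos_of_pos h1pos _).ne' (Real.rpow_pos_of_pos h3pos _).ne',
      Real.log_rpow h1pos, Real.log_rpow h3pos] at this
  rw [ge_iff_le, sub_le_iff_le_add]
  calc (1/β) * Real.log I2 ≤ (1/β) * (β * Real.log I1 + γ * Real.log I3) :=
        mul_le_mul_of_nonneg_left hlog (by positivity)
    _ = Real.log I1 + γ/β * Real.log I3 := by field_simp
end

section
/- Upper bound via reverse Hölder: for γ < 0, the expression (1/(1-γ)) log ∫ q̃(z) L(z)^{1-γ} dμ − (γ/(1-γ)) log ∫ q̃(z)^{1/γ} p(z)^{1−1/γ} dμ is an upper bound on log ∫ p(z) L(z) dμ, assuming all integrals are finite and positive and q̃ is positive on the support of p. -/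
open MeasureTheory Real

/-- Reverse-Hölder extension: for `γ < 0` the expression is an upper bound. -/
theorem fractional_upper_bound_neg
    {Z : Type*} [MeasurableSpace Z] (μ : Measure Z)
    (p L q : Z → ℝ) (γ : ℝ) (hγ : γ < 0)
    (hp : ∀ z, 0 ≤ p z) (hL : ∀ z, 0 ≤ L z) (hq : ∀ z, 0 ≤ q z)
    (hpm : Measurable p) (hLm : Measurable L) (hqm : Measurable q)
    (hprob : ∫ z, p z ∂μ = 1)
    (hqpos : ∀ z, 0 < p z → 0 < q z)
    (h1 : Integrable (fun z => p z * L z) μ)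
    (h1pos : 0 < ∫ z, p z * L z ∂μ)
    (h2 : Integrable (fun z => q z * L z ^ (1 - γ)) μ)
    (h2pos : 0 < ∫ z, q z * L z ^ (1 - γ) ∂μ)
    (h3 : Integrable (fun z => q z ^ (1/γ) * p z ^ (1 - 1/γ)) μ)
    (h3pos : 0 < ∫ z, q z ^ (1/γ) * p z ^ (1 - 1/γ) ∂μ) :
    Real.log (∫ z, p z * L z ∂μ) ≤
      (1/(1-γ)) * Real.log (∫ z, q z * L z ^ (1 - γ) ∂μ)
      - (γ/(1-γ)) * Real.log (∫ z, q z ^ (1/γ) * p z ^ (1 - 1/γ) ∂μ) := by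
  have hγ0 : γ ≠ 0 := ne_of_lt hγ
  have hr0 : (0:ℝ) < 1 - γ := by linarith
  have hr0' : (1:ℝ) - γ ≠ 0 := ne_of_gt hr0
  set r : ℝ := 1 - γ with hrdef
  set s : ℝ := (1 - γ)/(-γ) with hsdef
  have hs0 : (0:ℝ) < s := by
    apply div_pos hr0; linarith
  have hrs : r.HolderConjugate s := by
    rw [Real.holderConjugate_iff]
    constructor
    · simp only [hrdef]; linarith
    · rw [hsdef, hrdef, inv_div, ← one_div, ← add_div, ← sub_eq_add_neg,
        div_self (ne_of_gt (by linarith : (0:ℝ) < 1 - γ))]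
  have h1s : 1/s = -γ/(1-γ) := by
    rw [hsdef, one_div, inv_div]
  -- the two Hölder factors
  set f : Z → ℝ := fun z => (q z * L z ^ (1 - γ)) ^ (1/r) with hfdef
  set g : Z → ℝ := fun z => (q z ^ (1/γ) * p z ^ (1 - 1/γ)) ^ (1/s) with hgdef
  have hf_nonneg : ∀ z, 0 ≤ f z := fun z => Real.rpow_nonneg
    (mul_nonneg (hq z) (Real.rpow_nonneg (hL z) _)) _
  have hg_nonneg : ∀ z, 0 ≤ g z := fun z => Real.rpow_nonneg
    (mul_nonneg (Real.rpow_nonneg (hq z) _) (Real.rpow_nonneg (hp z) _)) _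
  have hfr : ∀ z, f z ^ r = q z * L z ^ (1 - γ) := by
    intro z
    rw [hfdef]
    simp only [one_div]
    exact Real.rpow_inv_rpow (mul_nonneg (hq z) (Real.rpow_nonneg (hL z) _)) hr0'
  have hgs : ∀ z, g z ^ s = q z ^ (1/γ) * p z ^ (1 - 1/γ) := by
    intro z
    rw [hgdef]
    simp only [one_div]
    exact Real.rpow_inv_rpow
      (mul_nonneg (Real.rpow_nonneg (hq z) _) (Real.rpow_nonneg (hp z) _)) (ne_of_gt hs0)
  -- pointwise identity p * L = f * g
  have hfg : ∀ z, p z * L z = f z * g z := by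
    intro z
    rcases eq_or_lt_of_le (hp z) with hpz | hpz
    · -- p z = 0
      have hg0 : g z = 0 := by
        rw [hgdef]
        have h10 : (0:ℝ) < 1 - 1/γ := by
          have : 1/γ < 0 := div_neg_of_pos_of_neg one_pos hγ
          linarith
        simp only [← hpz]
        rw [Real.zero_rpow (ne_of_gt h10), mul_zero,
          Real.zero_rpow (ne_of_gt (by positivity : (0:ℝ) < 1/s))]
      rw [hg0, mul_zero, ← hpz, zero_mul]
    · -- p z > 0, so q z > 0
      have hqz : 0 < q z := hqpos z hpz
      rcases eq_or_lt_of_le (hL z) with hLz | hLz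
      · -- L z = 0
        have hf0 : f z = 0 := by
          rw [hfdef]
          simp only [← hLz]
          rw [Real.zero_rpow hr0', mul_zero,
            Real.zero_rpow (ne_of_gt (by positivity : (0:ℝ) < 1/r))]
        rw [hf0, zero_mul, ← hLz, mul_zero]
      · -- all positive
        simp only [hfdef, hgdef]
        rw [Real.mul_rpow (le_of_lt hqz) (Real.rpow_nonneg (hL z) _)]
        rw [Real.mul_rpow (Real.rpow_nonneg (hq z) _) (Real.rpow_nonneg (hp z) _)]
        rw [← Real.rpow_mul (hL z), ← Real.rpow_mul (le_of_lt hqz),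
          ← Real.rpow_mul (le_of_lt hpz)]
        have e1 : (1 - γ) * (1/r) = 1 := by field_simp [hrdef]; exact hrdef.symm
        have e2 : (1/γ) * (1/s) = -(1/r) := by
          rw [h1s, hrdef]; field_simp
        have e3 : (1 - 1/γ) * (1/s) = 1 := by
          rw [h1s]; field_simp [hr0']
          rw [← neg_div, neg_sub, div_self (ne_of_gt (by linarith : (0:ℝ) < 1 - γ))]
        rw [e1, e2, e3, Real.rpow_one, Real.rpow_one, Real.rpow_neg (le_of_lt hqz)]
        have hqr : q z ^ (1/r) ≠ 0 := ne_of_gt (Real.rpow_pos_of_pos hqz _)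
        field_simp
  -- measurability of f and g
  have hfm : Measurable f := by rw [hfdef]; fun_prop
  have hgm : Measurable g := by rw [hgdef]; fun_prop
  set F : Z → ENNReal := fun z => ENNReal.ofReal (f z) with hFdef
  set G : Z → ENNReal := fun z => ENNReal.ofReal (g z) with hGdef
  have hFm : AEMeasurable F μ := (ENNReal.measurable_ofReal.comp hfm).aemeasurable
  have hGm : AEMeasurable G μ := (ENNReal.measurable_ofReal.comp hgm).aemeasurable
  have holder := ENNReal.lintegral_mul_le_Lp_mul_Lq μ hrs hFm hGm
  simp only [Pi.mul_apply] at holder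
  -- identify the three lintegrals
  have eA : ∫⁻ z, F z * G z ∂μ = ENNReal.ofReal (∫ z, p z * L z ∂μ) := by
    rw [MeasureTheory.ofReal_integral_eq_lintegral_ofReal h1
      (Filter.Eventually.of_forall fun z => mul_nonneg (hp z) (hL z))]
    refine lintegral_congr fun z => ?_
    rw [hFdef, hGdef, ← ENNReal.ofReal_mul (hf_nonneg z), ← hfg z]
  have eB : ∫⁻ z, F z ^ r ∂μ = ENNReal.ofReal (∫ z, q z * L z ^ (1 - γ) ∂μ) := by
    rw [MeasureTheory.ofReal_integral_eq_lintegral_ofReal h2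
      (Filter.Eventually.of_forall fun z => mul_nonneg (hq z) (Real.rpow_nonneg (hL z) _))]
    refine lintegral_congr fun z => ?_
    rw [hFdef, ENNReal.ofReal_rpow_of_nonneg (hf_nonneg z) (le_of_lt hrs.pos), hfr z]
  have eC : ∫⁻ z, G z ^ s ∂μ = ENNReal.ofReal (∫ z, q z ^ (1/γ) * p z ^ (1 - 1/γ) ∂μ) := by
    rw [MeasureTheory.ofReal_integral_eq_lintegral_ofReal h3
      (Filter.Eventually.of_forall fun z =>
        mul_nonneg (Real.rpow_nonneg (hq z) _) (Real.rpow_nonneg (hp z) _))]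
    refine lintegral_congr fun z => ?_
    rw [hGdef, ENNReal.ofReal_rpow_of_nonneg (hg_nonneg z) (le_of_lt hs0), hgs z]
  rw [eA, eB, eC] at holder
  rw [ENNReal.ofReal_rpow_of_pos h2pos, ENNReal.ofReal_rpow_of_pos h3pos,
    ← ENNReal.ofReal_mul (Real.rpow_nonneg (le_of_lt h2pos) _)] at holder
  have key : (∫ z, p z * L z ∂μ) ≤
      (∫ z, q z * L z ^ (1 - γ) ∂μ) ^ (1/r) *
        (∫ z, q z ^ (1/γ) * p z ^ (1 - 1/γ) ∂μ) ^ (1/s) := by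
    rw [← ENNReal.ofReal_le_ofReal_iff
      (mul_nonneg (Real.rpow_nonneg (le_of_lt h2pos) _) (Real.rpow_nonneg (le_of_lt h3pos) _))]
    exact holder
  -- take logarithms
  have hBpos : (0:ℝ) < (∫ z, q z * L z ^ (1 - γ) ∂μ) ^ (1/r) :=
    Real.rpow_pos_of_pos h2pos _
  have hCpos : (0:ℝ) < (∫ z, q z ^ (1/γ) * p z ^ (1 - 1/γ) ∂μ) ^ (1/s) :=
    Real.rpow_pos_of_pos h3pos _
  have hlog := Real.log_le_log h1pos key
  rw [Real.log_mul (ne_of_gt hBpos) (ne_of_gt hCpos),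
    Real.log_rpow h2pos, Real.log_rpow h3pos, h1s] at hlog
  calc Real.log (∫ z, p z * L z ∂μ)
      ≤ 1/r * Real.log (∫ z, q z * L z ^ (1 - γ) ∂μ)
        + -γ/(1-γ) * Real.log (∫ z, q z ^ (1/γ) * p z ^ (1 - 1/γ) ∂μ) := hlog
    _ = _ := by rw [hrdef]; ring
end

section
/- Divergence property of the fractional bound: define, for probability densities p₀ (prior), p₁ (target), p₂ (approximation) with appropriate absolute continuity and γ ∈ (0,1), D^frac_γ(p₂‖p₁) = log ∫ p₁^{1/γ} p₀^{1−1/γ} dμ − (1/(1-γ)) log ∫ p₂ p₁^{1/γ−1} p₀^{1−1/γ} dμ + (γ/(1-γ)) log ∫ p₂^{1/γ} p₀^{1−1/γ} dμ. Then D^frac_γ(p₂‖p₁) ≥ 0, with equality when p₂ = p₁. -/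
open MeasureTheory Real

/-- The fractional divergence `D^frac_γ` is nonnegative, and vanishes at `p₂ = p₁`. -/
theorem dfrac_nonneg_and_eq_zero
    {Z : Type*} [MeasurableSpace Z] (μ : Measure Z)
    (p₀ p₁ p₂ : Z → ℝ) (γ : ℝ) (hγ : γ ∈ Set.Ioo (0:ℝ) 1)
    (h0 : ∀ z, 0 ≤ p₀ z) (h1 : ∀ z, 0 ≤ p₁ z) (h2 : ∀ z, 0 ≤ p₂ z)
    (h0m : Measurable p₀) (h1m : Measurable p₁) (h2m : Measurable p₂)
    (h0prob : ∫ z, p₀ z ∂μ = 1) (h1prob : ∫ z, p₁ z ∂μ = 1) (h2prob : ∫ z, p₂ z ∂μ = 1)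
    (hsupp0 : ∀ z, p₀ z = 0 → p₂ z = 0) (hsupp1 : ∀ z, p₁ z = 0 → p₂ z = 0)
    (hA : Integrable (fun z => p₁ z ^ (1/γ) * p₀ z ^ (1 - 1/γ)) μ)
    (hApos : 0 < ∫ z, p₁ z ^ (1/γ) * p₀ z ^ (1 - 1/γ) ∂μ)
    (hB : Integrable (fun z => p₂ z * p₁ z ^ (1/γ - 1) * p₀ z ^ (1 - 1/γ)) μ)
    (hBpos : 0 < ∫ z, p₂ z * p₁ z ^ (1/γ - 1) * p₀ z ^ (1 - 1/γ) ∂μ)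
    (hB1 : Integrable (fun z => p₁ z * p₁ z ^ (1/γ - 1) * p₀ z ^ (1 - 1/γ)) μ)
    (hB1pos : 0 < ∫ z, p₁ z * p₁ z ^ (1/γ - 1) * p₀ z ^ (1 - 1/γ) ∂μ)
    (hC : Integrable (fun z => p₂ z ^ (1/γ) * p₀ z ^ (1 - 1/γ)) μ)
    (hCpos : 0 < ∫ z, p₂ z ^ (1/γ) * p₀ z ^ (1 - 1/γ) ∂μ) :
    (0 ≤ Real.log (∫ z, p₁ z ^ (1/γ) * p₀ z ^ (1 - 1/γ) ∂μ)
        - (1/(1-γ)) * Real.log (∫ z, p₂ z * p₁ z ^ (1/γ - 1) * p₀ z ^ (1 - 1/γ) ∂μ)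
        + (γ/(1-γ)) * Real.log (∫ z, p₂ z ^ (1/γ) * p₀ z ^ (1 - 1/γ) ∂μ))
    ∧ (Real.log (∫ z, p₁ z ^ (1/γ) * p₀ z ^ (1 - 1/γ) ∂μ)
        - (1/(1-γ)) * Real.log (∫ z, p₁ z * p₁ z ^ (1/γ - 1) * p₀ z ^ (1 - 1/γ) ∂μ)
        + (γ/(1-γ)) * Real.log (∫ z, p₁ z ^ (1/γ) * p₀ z ^ (1 - 1/γ) ∂μ) = 0) := by
  obtain ⟨hγ0, hγ1⟩ := hγ
  have h1γ : (0:ℝ) < 1 - γ := by linarith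
  have ha1 : (1:ℝ) < 1/γ := by
    rw [lt_div_iff₀ hγ0]; linarith
  have ha0 : (0:ℝ) < 1/γ := by positivity
  constructor
  · -- nonnegativity
    set u : Z → ℝ := fun z => p₁ z ^ (1/γ) * p₀ z ^ (1 - 1/γ) with hu
    set v : Z → ℝ := fun z => p₂ z ^ (1/γ) * p₀ z ^ (1 - 1/γ) with hv
    have hun : ∀ z, 0 ≤ u z := fun z => mul_nonneg (rpow_nonneg (h1 z) _) (rpow_nonneg (h0 z) _)
    have hvn : ∀ z, 0 ≤ v z := fun z => mul_nonneg (rpow_nonneg (h2 z) _) (rpow_nonneg (h0 z) _)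
    have hum : Measurable u := by fun_prop
    have hvm : Measurable v := by fun_prop
    have hfmeas : Measurable (fun z => u z ^ (1 - γ)) := by fun_prop
    have hgmeas : Measurable (fun z => v z ^ γ) := by fun_prop
    set f : Z → ℝ := fun z => u z ^ (1 - γ) with hf
    set g : Z → ℝ := fun z => v z ^ γ with hg
    have hPne : ENNReal.ofReal (1/(1-γ)) ≠ 0 := by
      rw [Ne, ENNReal.ofReal_eq_zero, not_le]; positivity
    have hQne : ENNReal.ofReal (1/γ) ≠ 0 := by
      rw [Ne, ENNReal.ofReal_eq_zero, not_le]; positivity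
    have hPt : (ENNReal.ofReal (1/(1-γ))).toReal = 1/(1-γ) :=
      ENNReal.toReal_ofReal (by positivity)
    have hQt : (ENNReal.ofReal (1/γ)).toReal = 1/γ :=
      ENNReal.toReal_ofReal (by positivity)
    have hfmem : MemLp f (ENNReal.ofReal (1/(1-γ))) μ := by
      rw [← memLp_norm_rpow_iff (q := ENNReal.ofReal (1/(1-γ)))
        hfmeas.aestronglyMeasurable hPne (by simp),
        ENNReal.div_self hPne (by simp)]
      have : (fun x => ‖f x‖ ^ (ENNReal.ofReal (1/(1-γ))).toReal) = u := by
        funext x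
        rw [hPt, Real.norm_of_nonneg (rpow_nonneg (hun x) _), ← Real.rpow_mul (hun x)]
        rw [mul_one_div, div_self (ne_of_gt h1γ), Real.rpow_one]
      rw [this, memLp_one_iff_integrable]
      exact hA
    have hgmem : MemLp g (ENNReal.ofReal (1/γ)) μ := by
      rw [← memLp_norm_rpow_iff (q := ENNReal.ofReal (1/γ))
        hgmeas.aestronglyMeasurable hQne (by simp),
        ENNReal.div_self hQne (by simp)]
      have : (fun x => ‖g x‖ ^ (ENNReal.ofReal (1/γ)).toReal) = v := by
        funext x
        rw [hQt, Real.norm_of_nonneg (rpow_nonneg (hvn x) _), ← Real.rpow_mul (hvn x)]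
        rw [mul_one_div, div_self (ne_of_gt hγ0), Real.rpow_one]
      rw [this, memLp_one_iff_integrable]
      exact hC
    have hconj : Real.HolderConjugate (1/(1-γ)) (1/γ) := by
      refine ⟨?_, by positivity, by positivity⟩
      rw [one_div, one_div, inv_inv, inv_inv, inv_one]; ring
    have hold := integral_mul_le_Lp_mul_Lq_of_nonneg (μ := μ) hconj
      (Filter.Eventually.of_forall fun x => rpow_nonneg (hun x) _)
      (Filter.Eventually.of_forall fun x => rpow_nonneg (hvn x) _) hfmem hgmem
    -- rewrite the three pieces
    have hfg : ∀ z, f z * g z = p₂ z * p₁ z ^ (1/γ - 1) * p₀ z ^ (1 - 1/γ) := by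
      intro z
      rcases eq_or_lt_of_le (h0 z) with h0z | h0z
      · have hp2 : p₂ z = 0 := hsupp0 z h0z.symm
        have he : (1 - 1/γ) ≠ 0 := by intro h; nlinarith
        simp only [hf, hg, hu, hv, ← h0z, Real.zero_rpow he, mul_zero, hp2, zero_mul,
          Real.zero_rpow (by positivity : (1-γ) ≠ 0), Real.zero_rpow (ne_of_gt hγ0)]
      · simp only [hf, hg, hu, hv]
        rw [Real.mul_rpow (rpow_nonneg (h1 z) _) (rpow_nonneg (h0 z) _),
          Real.mul_rpow (rpow_nonneg (h2 z) _) (rpow_nonneg (h0 z) _),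
          ← Real.rpow_mul (h1 z), ← Real.rpow_mul (h0 z), ← Real.rpow_mul (h2 z),
          ← Real.rpow_mul (h0 z)]
        have e1 : 1/γ * (1-γ) = 1/γ - 1 := by field_simp
        have e2 : 1/γ * γ = 1 := by field_simp
        rw [e1, e2, Real.rpow_one]
        rw [show (p₁ z ^ (1/γ-1) * p₀ z ^ ((1-1/γ)*(1-γ)) * (p₂ z * p₀ z ^ ((1-1/γ)*γ)))
          = p₂ z * p₁ z ^ (1/γ-1) * (p₀ z ^ ((1-1/γ)*(1-γ)) * p₀ z ^ ((1-1/γ)*γ)) by ring,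
          ← Real.rpow_add h0z]
        ring_nf
    have hfp : ∀ z, f z ^ (1/(1-γ)) = u z := by
      intro z
      rw [hf, ← Real.rpow_mul (hun z), mul_one_div, div_self (ne_of_gt h1γ), Real.rpow_one]
    have hgq : ∀ z, g z ^ (1/γ) = v z := by
      intro z
      rw [hg, ← Real.rpow_mul (hvn z), mul_one_div, div_self (ne_of_gt hγ0), Real.rpow_one]
    rw [show (∫ a, f a * g a ∂μ) = ∫ z, p₂ z * p₁ z ^ (1/γ - 1) * p₀ z ^ (1 - 1/γ) ∂μ from
        integral_congr_ae (Filter.Eventually.of_forall hfg),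
      show (∫ a, f a ^ (1/(1-γ)) ∂μ) = ∫ z, u z ∂μ from
        integral_congr_ae (Filter.Eventually.of_forall hfp),
      show (∫ a, g a ^ (1/γ) ∂μ) = ∫ z, v z ∂μ from
        integral_congr_ae (Filter.Eventually.of_forall hgq)] at hold
    have h11 : 1/(1/(1-γ)) = 1 - γ := by field_simp
    have h12 : 1/(1/γ) = γ := by field_simp
    rw [h11, h12] at hold
    -- take logs
    have hlog : Real.log (∫ z, p₂ z * p₁ z ^ (1/γ - 1) * p₀ z ^ (1 - 1/γ) ∂μ)
        ≤ (1-γ) * Real.log (∫ z, u z ∂μ) + γ * Real.log (∫ z, v z ∂μ) := by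
      calc Real.log (∫ z, p₂ z * p₁ z ^ (1/γ - 1) * p₀ z ^ (1 - 1/γ) ∂μ)
          ≤ Real.log ((∫ z, u z ∂μ) ^ (1-γ) * (∫ z, v z ∂μ) ^ γ) :=
            Real.log_le_log hBpos hold
        _ = (1-γ) * Real.log (∫ z, u z ∂μ) + γ * Real.log (∫ z, v z ∂μ) := by
            rw [Real.log_mul (ne_of_gt (rpow_pos_of_pos hApos _))
              (ne_of_gt (rpow_pos_of_pos hCpos _)),
              Real.log_rpow hApos, Real.log_rpow hCpos]
    set lA := Real.log (∫ z, u z ∂μ)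
    set lB := Real.log (∫ z, p₂ z * p₁ z ^ (1/γ - 1) * p₀ z ^ (1 - 1/γ) ∂μ)
    set lC := Real.log (∫ z, v z ∂μ)
    have key : 1/(1-γ) * lB ≤ 1/(1-γ) * ((1-γ)*lA + γ*lC) :=
      mul_le_mul_of_nonneg_left hlog (by positivity)
    have hexp : 1/(1-γ) * ((1-γ)*lA + γ*lC) = lA + γ/(1-γ)*lC := by field_simp
    rw [hexp] at key
    linarith
  · -- equality at p₂ = p₁
    have heq : (∫ z, p₁ z * p₁ z ^ (1/γ - 1) * p₀ z ^ (1 - 1/γ) ∂μ)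
        = ∫ z, p₁ z ^ (1/γ) * p₀ z ^ (1 - 1/γ) ∂μ := by
      refine integral_congr_ae (Filter.Eventually.of_forall fun z => ?_)
      show p₁ z * p₁ z ^ (1/γ - 1) * p₀ z ^ (1 - 1/γ) = p₁ z ^ (1/γ) * p₀ z ^ (1 - 1/γ)
      rcases eq_or_lt_of_le (h1 z) with h1z | h1z
      · simp only [← h1z, Real.zero_rpow (ne_of_gt ha0), zero_mul, mul_eq_zero]
      · rw [show p₁ z * p₁ z ^ (1/γ - 1) = p₁ z ^ (1:ℝ) * p₁ z ^ (1/γ - 1) by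
          rw [Real.rpow_one], ← Real.rpow_add h1z]
        ring_nf
    rw [heq]
    have : (1 : ℝ) - 1/(1-γ) + γ/(1-γ) = 0 := by field_simp; ring
    set lA := Real.log (∫ z, p₁ z ^ (1/γ) * p₀ z ^ (1 - 1/γ) ∂μ)
    linear_combination lA * this
end

section
/- Reduction to Rényi divergence: with p₀, p₁, p₂ probability densities and γ ∈ (0,1), define p̃ᵢ(z) = pᵢ(z)^{1/γ} p₀(z)^{1−1/γ}/Zᵢ with Zᵢ = ∫ pᵢ^{1/γ} p₀^{1−1/γ} dμ for i = 1,2 (assumed finite and positive). Then D^frac_γ(p₂‖p₁) = (1/(γ−1)) log ∫ p̃₂(z)^γ p̃₁(z)^{1-γ} dμ, the Rényi divergence of order γ from p̃₂ to p̃₁. -/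
open MeasureTheory Real

/-- `D^frac_γ` reduces to the Rényi divergence of order `γ` between the tilted
densities `p̃ᵢ = pᵢ^{1/γ} p₀^{1-1/γ}/Zᵢ`. -/
theorem dfrac_eq_renyi
    {Z : Type*} [MeasurableSpace Z] (μ : Measure Z)
    (p₀ p₁ p₂ : Z → ℝ) (γ : ℝ) (hγ : γ ∈ Set.Ioo (0:ℝ) 1)
    (h0 : ∀ z, 0 ≤ p₀ z) (h1 : ∀ z, 0 ≤ p₁ z) (h2 : ∀ z, 0 ≤ p₂ z)
    (h0m : Measurable p₀) (h1m : Measurable p₁) (h2m : Measurable p₂)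
    (h0prob : ∫ z, p₀ z ∂μ = 1) (h1prob : ∫ z, p₁ z ∂μ = 1) (h2prob : ∫ z, p₂ z ∂μ = 1)
    (hsupp0 : ∀ z, p₀ z = 0 → p₂ z = 0) (hsupp1 : ∀ z, p₁ z = 0 → p₂ z = 0)
    (Z₁ Z₂ : ℝ)
    (hZ₁ : Z₁ = ∫ z, p₁ z ^ (1/γ) * p₀ z ^ (1 - 1/γ) ∂μ) (hZ₁pos : 0 < Z₁)
    (hZ₂ : Z₂ = ∫ z, p₂ z ^ (1/γ) * p₀ z ^ (1 - 1/γ) ∂μ) (hZ₂pos : 0 < Z₂)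
    (hZ₁int : Integrable (fun z => p₁ z ^ (1/γ) * p₀ z ^ (1 - 1/γ)) μ)
    (hZ₂int : Integrable (fun z => p₂ z ^ (1/γ) * p₀ z ^ (1 - 1/γ)) μ)
    (hB : Integrable (fun z => p₂ z * p₁ z ^ (1/γ - 1) * p₀ z ^ (1 - 1/γ)) μ)
    (hBpos : 0 < ∫ z, p₂ z * p₁ z ^ (1/γ - 1) * p₀ z ^ (1 - 1/γ) ∂μ) :
    Real.log Z₁
      - (1/(1-γ)) * Real.log (∫ z, p₂ z * p₁ z ^ (1/γ - 1) * p₀ z ^ (1 - 1/γ) ∂μ)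
      + (γ/(1-γ)) * Real.log Z₂
    = (1/(γ-1)) * Real.log (∫ z,
        (p₂ z ^ (1/γ) * p₀ z ^ (1 - 1/γ) / Z₂) ^ γ *
        (p₁ z ^ (1/γ) * p₀ z ^ (1 - 1/γ) / Z₁) ^ (1-γ) ∂μ) := by
  obtain ⟨hγ0, hγ1⟩ := hγ
  have hγne : γ ≠ 0 := ne_of_gt hγ0
  have hγ1ne : γ - 1 ≠ 0 := by linarith
  have he : (1 : ℝ) - 1/γ ≠ 0 := by
    intro h
    have h' : (1:ℝ)/γ = 1 := by linarith
    rw [div_eq_one_iff_eq hγne] at h'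
    linarith
  have key : ∀ z, (p₂ z ^ (1/γ) * p₀ z ^ (1 - 1/γ) / Z₂) ^ γ *
        (p₁ z ^ (1/γ) * p₀ z ^ (1 - 1/γ) / Z₁) ^ (1-γ)
      = (Z₂ ^ γ * Z₁ ^ (1-γ))⁻¹ * (p₂ z * p₁ z ^ (1/γ - 1) * p₀ z ^ (1 - 1/γ)) := by
    intro z
    have h0p : (0:ℝ) ≤ p₀ z ^ (1 - 1/γ) := Real.rpow_nonneg (h0 z) _
    have e1 : 1/γ * γ = 1 := by field_simp
    have e2 : 1/γ * (1-γ) = 1/γ - 1 := by field_simp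
    have e3 : p₀ z ^ ((1 - 1/γ) * γ) * p₀ z ^ ((1 - 1/γ) * (1-γ)) = p₀ z ^ (1 - 1/γ) := by
      rw [← Real.rpow_add' (h0 z) (by rw [show (1 - 1/γ) * γ + (1 - 1/γ) * (1-γ) = 1 - 1/γ by ring]; exact he)]
      congr 1; ring
    rw [Real.div_rpow (mul_nonneg (Real.rpow_nonneg (h2 z) _) h0p) hZ₂pos.le,
      Real.div_rpow (mul_nonneg (Real.rpow_nonneg (h1 z) _) h0p) hZ₁pos.le,
      Real.mul_rpow (Real.rpow_nonneg (h2 z) _) h0p,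
      Real.mul_rpow (Real.rpow_nonneg (h1 z) _) h0p,
      ← Real.rpow_mul (h2 z), ← Real.rpow_mul (h1 z),
      ← Real.rpow_mul (h0 z), ← Real.rpow_mul (h0 z),
      e1, e2, Real.rpow_one, ← e3]
    ring
  simp only [key]
  have h1γ : (1:ℝ) - γ ≠ 0 := by linarith
  rw [integral_const_mul, Real.log_mul (by positivity) (ne_of_gt hBpos), Real.log_inv,
    Real.log_mul (Real.rpow_pos_of_pos hZ₂pos γ).ne' (Real.rpow_pos_of_pos hZ₁pos _).ne',
    Real.log_rpow hZ₂pos, Real.log_rpow hZ₁pos]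
  field_simp
  ring
end
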